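/- arXiv:math/0611021 — 2 statements merged into one kernel-verified Lean document; each statement's English description precedes it below -/
import Mathlib

section
/- Let a, b ∈ L¹(0,T) with b ≥ 0, and let u : [0,T] → ℝ be a lower semicontinuous nonnegative function. Suppose there exists a null Lebesgue set S ⊂ (0,T] (not containing 0) such that for all s ∉ S and all t ∈ [s,T], u(t) ≤ u(s) + ∫_s^t a(r)u(r) dr + ∫_s^t b(r) dr. Then u(T) ≤ u(0)·exp(∫_0^T a(s) ds) + ∫_0^T b(s)·exp(∫_s^T a(r) dr) ds. -/
open MeasureTheory Set Filter Topology

set_option maxHeartbeats 1000000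

lemma exp_diff_le (p q L : ℝ) (hp : |p| ≤ L) (hq : |q| ≤ L) :
    Real.exp p - Real.exp q ≤ Real.exp L * |p - q| := by
  rcases le_total p q with h | h
  · have h1 : Real.exp p ≤ Real.exp q := Real.exp_le_exp.2 h
    have h2 : (0:ℝ) ≤ Real.exp L * |p - q| := by positivity
    linarith
  · have h1 : Real.exp p - Real.exp q = Real.exp p * (1 - Real.exp (q - p)) := by
      rw [mul_sub, mul_one, ← Real.exp_add]; ring_nf
    have h2 : 1 - Real.exp (q - p) ≤ p - q := by
      have := Real.add_one_le_exp (q - p); linarith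
    have h3 : Real.exp p ≤ Real.exp L := Real.exp_le_exp.2 (le_trans (le_abs_self p) hp)
    have h4 : (0:ℝ) < Real.exp p := Real.exp_pos p
    have h5 : Real.exp p * (1 - Real.exp (q - p)) ≤ Real.exp p * (p - q) := by
      apply mul_le_mul_of_nonneg_left h2 (le_of_lt h4)
    have h6 : p - q = |p - q| := (abs_of_nonneg (by linarith)).symm
    rw [h1]
    calc Real.exp p * (1 - Real.exp (q - p)) ≤ Real.exp p * (p - q) := h5
      _ ≤ Real.exp L * |p - q| := by rw [← h6]; apply mul_le_mul_of_nonneg_right h3 (by linarith)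

lemma lemC (T : ℝ) (a u : ℝ → ℝ) (M : ℝ)
    (ha : IntervalIntegrable a volume 0 T) (hT : 0 ≤ T)
    (hu_meas : AEStronglyMeasurable u (volume.restrict (Icc 0 T)))
    (hu_nonneg : ∀ t ∈ Icc (0:ℝ) T, 0 ≤ u t)
    (hM : ∀ t ∈ Icc (0:ℝ) T, u t ≤ M) :
    IntervalIntegrable (fun r => a r * u r) volume 0 T := by
  rw [intervalIntegrable_iff_integrableOn_Ioc_of_le hT]
  have ha' : IntegrableOn a (Ioc 0 T) volume := by
    rw [intervalIntegrable_iff_integrableOn_Ioc_of_le hT] at ha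
    exact ha
  have hmeas : AEStronglyMeasurable (fun r => a r * u r) (volume.restrict (Ioc 0 T)) := by
    exact ha'.aestronglyMeasurable.mul
      (hu_meas.mono_measure (Measure.restrict_mono Ioc_subset_Icc_self le_rfl))
  apply Integrable.mono' (ha'.abs.mul_const M) hmeas
  rw [ae_restrict_iff' measurableSet_Ioc]
  apply ae_of_all
  intro x hx
  have hx' : x ∈ Icc (0:ℝ) T := Ioc_subset_Icc_self hx
  rw [Real.norm_eq_abs, abs_mul, abs_of_nonneg (hu_nonneg x hx')]
  exact mul_le_mul_of_nonneg_left (hM x hx') (abs_nonneg _)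

lemma intInt_mono (f : ℝ → ℝ) (s t e : ℝ) (hst : s ≤ t) (hte : t ≤ e)
    (hf : IntervalIntegrable f volume s e) (h0 : ∀ r ∈ Icc s e, 0 ≤ f r) :
    (∫ r in s..t, f r) ≤ ∫ r in s..e, f r := by
  have h1 : IntervalIntegrable f volume s t :=
    hf.mono_set (uIcc_subset_uIcc (by simp [le_trans hst hte]) (by simp [hst, hte, le_trans hst hte]))
  have h2 : IntervalIntegrable f volume t e :=
    hf.mono_set (uIcc_subset_uIcc (by simp [hst, hte, le_trans hst hte]) (by simp [le_trans hst hte]))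
  have h3 := intervalIntegral.integral_add_adjacent_intervals h1 h2
  have h4 : 0 ≤ ∫ r in t..e, f r :=
    intervalIntegral.integral_nonneg hte (fun x hx => h0 x ⟨le_trans hst hx.1, hx.2⟩)
  linarith

lemma restrInt (T : ℝ) (f : ℝ → ℝ) (hf : IntervalIntegrable f volume 0 T)
    (x y : ℝ) (hx : x ∈ Icc (0:ℝ) T) (hy : y ∈ Icc (0:ℝ) T) :
    IntervalIntegrable f volume x y :=
  hf.mono_set (uIcc_subset_uIcc (Icc_subset_uIcc hx) (Icc_subset_uIcc hy))

lemma primdiff (T : ℝ) (f : ℝ → ℝ) (hf : IntervalIntegrable f volume 0 T)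
    (s t : ℝ) (hs : s ∈ Icc (0:ℝ) T) (ht : t ∈ Icc (0:ℝ) T) :
    (∫ r in s..t, f r) = (∫ r in (0:ℝ)..t, f r) - ∫ r in (0:ℝ)..s, f r := by
  have hT0 : (0:ℝ) ≤ T := le_trans hs.1 hs.2
  have h1 := intervalIntegral.integral_add_adjacent_intervals
    (restrInt T f hf 0 s ⟨le_refl 0, hT0⟩ hs) (restrInt T f hf s t hs ht)
  linarith

lemma lemUP (T : ℝ) (a b u : ℝ → ℝ) (S : Set ℝ) (M : ℝ)
    (ha : IntervalIntegrable a volume 0 T)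
    (hb : IntervalIntegrable b volume 0 T)
    (hau : IntervalIntegrable (fun r => a r * u r) volume 0 T)
    (hu_nonneg : ∀ t ∈ Icc (0:ℝ) T, 0 ≤ u t)
    (hM : ∀ t ∈ Icc (0:ℝ) T, u t ≤ M)
    (hineq : ∀ s ∈ Icc (0:ℝ) T \ S, ∀ t ∈ Icc s T,
      u t ≤ u s + (∫ r in s..t, a r * u r) + ∫ r in s..t, b r)
    (s t : ℝ) (hs : s ∈ Icc (0:ℝ) T \ S) (ht : t ∈ Icc s T) :
    u t - u s ≤ (∫ r in s..t, |a r|) * M + ∫ r in s..t, b r := by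
  obtain ⟨⟨hs0, hsT⟩, hsS⟩ := hs
  obtain ⟨hst, htT⟩ := ht
  have htI : t ∈ Icc (0:ℝ) T := ⟨le_trans hs0 hst, htT⟩
  have hsI : s ∈ Icc (0:ℝ) T := ⟨hs0, hsT⟩
  have hsubI : Icc s t ⊆ Icc (0:ℝ) T := Icc_subset_Icc hs0 htT
  have hau_st : IntervalIntegrable (fun r => a r * u r) volume s t := restrInt T _ hau s t hsI htI
  have habs_st : IntervalIntegrable (fun r => |a r|) volume s t := restrInt T _ ha.abs s t hsI htI
  have h1 := hineq s ⟨hsI, hsS⟩ t ⟨hst, htT⟩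
  have h2 : (∫ r in s..t, a r * u r) ≤ (∫ r in s..t, |a r|) * M := by
    calc (∫ r in s..t, a r * u r) ≤ |∫ r in s..t, a r * u r| := le_abs_self _
      _ ≤ ∫ r in s..t, |a r * u r| := intervalIntegral.abs_integral_le_integral_abs hst
      _ ≤ ∫ r in s..t, |a r| * M := by
          apply intervalIntegral.integral_mono_on hst hau_st.abs (habs_st.mul_const M)
          intro x hx
          rw [abs_mul, abs_of_nonneg (hu_nonneg x (hsubI hx))]
          exact mul_le_mul_of_nonneg_left (hM x (hsubI hx)) (abs_nonneg _)
      _ = (∫ r in s..t, |a r|) * M := intervalIntegral.integral_mul_const _ _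
  linarith

lemma pick_good (S : Set ℝ) (hS_null : volume S = 0) (x y : ℝ) (hxy : x < y) :
    ∃ z, z ∈ Ioo x y ∧ z ∉ S := by
  have h1 : volume (Ioo x y \ S) = volume (Ioo x y) := measure_diff_null hS_null
  have h2 : volume (Ioo x y) ≠ 0 := by
    simp only [Real.volume_Ioo, ne_eq, ENNReal.ofReal_eq_zero, not_le]
    linarith
  obtain ⟨z, hz⟩ := nonempty_of_measure_ne_zero (h1 ▸ h2)
  exact ⟨z, hz.1, hz.2⟩

lemma lemA (T : ℝ) (a b u : ℝ → ℝ) (S : Set ℝ)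
    (hb_nonneg : ∀ t ∈ Icc (0:ℝ) T, 0 ≤ b t)
    (hu_nonneg : ∀ t ∈ Icc (0:ℝ) T, 0 ≤ u t)
    (hineq : ∀ s ∈ Icc (0:ℝ) T \ S, ∀ t ∈ Icc s T,
      u t ≤ u s + (∫ r in s..t, a r * u r) + ∫ r in s..t, b r)
    (s e : ℝ) (hs : s ∈ Icc 0 T \ S) (hse : s ≤ e) (heT : e ≤ T)
    (hb' : IntervalIntegrable b volume s e)
    (ha' : IntervalIntegrable (fun r => |a r|) volume s e)
    (hδ : (∫ r in s..e, |a r|) ≤ 1/2) :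
    ∀ t ∈ Icc s e, u t ≤ 2*(u s + (∫ r in s..e, b r)) + 2 := by
  obtain ⟨⟨hs0, hsT⟩, hsS⟩ := hs
  have hsub : Icc s e ⊆ Icc 0 T := Icc_subset_Icc hs0 heT
  set B := ∫ r in s..e, b r with hBdef
  have hB0 : 0 ≤ B := intervalIntegral.integral_nonneg hse (fun x hx => hb_nonneg x (hsub hx))
  intro t ht
  obtain ⟨hst, hte⟩ := ht
  have htT : t ∈ Icc s T := ⟨hst, le_trans hte heT⟩
  have hbt : (∫ r in s..t, b r) ≤ B :=
    intInt_mono b s t e hst hte hb' (fun x hx => hb_nonneg x (hsub hx))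
  have hkey := hineq s ⟨⟨hs0, hsT⟩, hsS⟩ t htT
  by_cases hi : IntervalIntegrable (fun r => a r * u r) volume s t
  · set V := u s + (∫ r in s..t, |a r * u r|) + B with hVdef
    have hus : 0 ≤ u s := hu_nonneg s ⟨hs0, hsT⟩
    have habs_st : IntervalIntegrable (fun r => |a r|) volume s t :=
      ha'.mono_set (uIcc_subset_uIcc (by simp [hse]) (by simp [hst, hte, hse]))
    have hiabs : IntervalIntegrable (fun r => |a r * u r|) volume s t := hi.abs
    have habs0 : 0 ≤ ∫ r in s..t, |a r * u r| :=
      intervalIntegral.integral_nonneg hst (fun x _ => abs_nonneg _)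
    have hV0 : 0 ≤ V := by positivity
    have hV : ∀ τ ∈ Icc s t, u τ ≤ V := by
      intro τ hτ
      have h1 := hineq s ⟨⟨hs0, hsT⟩, hsS⟩ τ ⟨hτ.1, le_trans (le_trans hτ.2 hte) heT⟩
      have h2 : (∫ r in s..τ, a r * u r) ≤ ∫ r in s..t, |a r * u r| := by
        calc (∫ r in s..τ, a r * u r) ≤ ∫ r in s..τ, |a r * u r| := by
              have := intervalIntegral.abs_integral_le_integral_abs (μ := volume)
                (f := fun r => a r * u r) (a := s) (b := τ) hτ.1
              exact le_trans (le_abs_self _) this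
          _ ≤ _ := intInt_mono _ s τ t hτ.1 hτ.2 hiabs (fun x _ => abs_nonneg _)
      have h3 : (∫ r in s..τ, b r) ≤ B :=
        intInt_mono b s τ e hτ.1 (le_trans hτ.2 hte) hb' (fun x hx => hb_nonneg x (hsub hx))
      simp only [hVdef]; linarith
    have hVbound : (∫ r in s..t, |a r * u r|) ≤ (1/2) * V := by
      have h1 : (∫ r in s..t, |a r * u r|) ≤ ∫ r in s..t, |a r| * V := by
        apply intervalIntegral.integral_mono_on hst hiabs (habs_st.mul_const V)
        intro x hx
        rw [abs_mul, abs_of_nonneg (hu_nonneg x (hsub ⟨hx.1, le_trans hx.2 hte⟩))]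
        exact mul_le_mul_of_nonneg_left (hV x hx) (abs_nonneg _)
      have h2 : (∫ r in s..t, |a r| * V) = (∫ r in s..t, |a r|) * V := by
        rw [intervalIntegral.integral_mul_const]
      have h3 : (∫ r in s..t, |a r|) ≤ 1/2 :=
        le_trans (intInt_mono _ s t e hst hte ha' (fun x _ => abs_nonneg _)) hδ
      rw [h2] at h1
      exact le_trans h1 (mul_le_mul_of_nonneg_right h3 hV0)
    -- V ≤ u s + V/2 + B  ⇒ V ≤ 2 (u s + B)
    have h4 : (∫ r in s..t, a r * u r) ≤ ∫ r in s..t, |a r * u r| := by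
      have := intervalIntegral.abs_integral_le_integral_abs (μ := volume)
        (f := fun r => a r * u r) (a := s) (b := t) hst
      exact le_trans (le_abs_self _) this
    simp only [hVdef] at hVbound
    linarith
  · rw [intervalIntegral.integral_undef hi] at hkey
    have hus : 0 ≤ u s := hu_nonneg s ⟨hs0, hsT⟩
    linarith

lemma lemB (T : ℝ) (hT : 0 < T) (a b u : ℝ → ℝ) (S : Set ℝ)
    (ha : IntervalIntegrable a volume 0 T)
    (hb : IntervalIntegrable b volume 0 T)
    (hb_nonneg : ∀ t ∈ Icc (0:ℝ) T, 0 ≤ b t)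
    (hu_nonneg : ∀ t ∈ Icc (0:ℝ) T, 0 ≤ u t)
    (hS : S ⊆ Ioc 0 T) (hS_null : volume S = 0)
    (hineq : ∀ s ∈ Icc (0:ℝ) T \ S, ∀ t ∈ Icc s T,
      u t ≤ u s + (∫ r in s..t, a r * u r) + ∫ r in s..t, b r) :
    ∃ M, ∀ t ∈ Icc (0:ℝ) T, u t ≤ M := by
  have h0S : (0:ℝ) ∉ S := fun h => lt_irrefl 0 (hS h).1
  set W : Set ℝ := {t | t ∈ Icc (0:ℝ) T ∧ ∃ M, ∀ τ ∈ Icc (0:ℝ) t, u τ ≤ M} with hW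
  have hW0 : (0:ℝ) ∈ W := by
    refine ⟨⟨le_refl 0, le_of_lt hT⟩, u 0, fun τ hτ => ?_⟩
    have : τ = 0 := le_antisymm hτ.2 hτ.1
    rw [this]
  have hWbdd : BddAbove W := ⟨T, fun x hx => hx.1.2⟩
  set c := sSup W with hc
  have hc0 : 0 ≤ c := le_csSup hWbdd hW0
  have hcT : c ≤ T := csSup_le ⟨0, hW0⟩ (fun x hx => hx.1.2)
  have hcIcc : c ∈ Icc (0:ℝ) T := ⟨hc0, hcT⟩
  have habs : IntervalIntegrable (fun r => |a r|) volume 0 T := ha.abs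
  set Φ : ℝ → ℝ := fun x => ∫ r in (0:ℝ)..x, |a r| with hΦdef
  have hΦ : ContinuousOn Φ (Icc 0 T) := by
    have := intervalIntegral.continuousOn_primitive_interval'
      (f := fun r => |a r|) (μ := volume) (a := 0) (b₁ := 0) (b₂ := T) habs
      (by rw [uIcc_of_le (le_of_lt hT)]; exact ⟨le_refl 0, le_of_lt hT⟩)
    rwa [uIcc_of_le (le_of_lt hT)] at this
  obtain ⟨η, hη0, hηd⟩ : ∃ η > 0, ∀ x ∈ Icc (0:ℝ) T, |x - c| ≤ η →
      |Φ x - Φ c| ≤ 1/4 := by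
    have h1 := (hΦ c hcIcc)
    rw [Metric.continuousWithinAt_iff] at h1
    obtain ⟨δ, hδ0, hδ⟩ := h1 (1/4) (by norm_num)
    refine ⟨δ/2, by linarith, fun x hx hdist => ?_⟩
    have := hδ hx (by rw [Real.dist_eq]; linarith)
    rw [Real.dist_eq] at this
    exact le_of_lt this
  obtain ⟨s', hs'Icc, hs'S, hs'near, hs'c, M₀, hM₀⟩ :
      ∃ s', s' ∈ Icc (0:ℝ) T ∧ s' ∉ S ∧ c - η ≤ s' ∧ s' ≤ c ∧
        ∃ M₀, ∀ τ ∈ Icc (0:ℝ) s', u τ ≤ M₀ := by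
    rcases eq_or_lt_of_le hc0 with hc0' | hc0'
    · exact ⟨0, ⟨le_refl 0, le_of_lt hT⟩, h0S, by linarith, hc0, hW0.2⟩
    · have hmlt : max (c - η) 0 < c := by
        rcases le_total (c - η) 0 with h | h
        · rw [max_eq_right h]; exact hc0'
        · rw [max_eq_left h]; linarith
      obtain ⟨w, hwW, hww⟩ := exists_lt_of_lt_csSup ⟨0, hW0⟩ hmlt
      obtain ⟨z, hz, hzS⟩ := pick_good S hS_null (max (c - η) 0) w hww
      obtain ⟨M₀, hM₀⟩ := hwW.2
      have hzw : z ≤ w := le_of_lt hz.2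
      have hz0 : 0 ≤ z := le_trans (le_max_right _ _) (le_of_lt hz.1)
      have hwc : w ≤ c := le_csSup hWbdd hwW
      refine ⟨z, ⟨hz0, le_trans hzw hwW.1.2⟩, hzS, ?_, le_trans hzw hwc,
        M₀, fun τ hτ => hM₀ τ ⟨hτ.1, le_trans hτ.2 hzw⟩⟩
      have h1 : c - η ≤ max (c - η) 0 := le_max_left _ _
      linarith [hz.1]
  set e := min (c + η) T with he
  have hce : c ≤ e := le_min (by linarith) hcT
  have hs'e : s' ≤ e := le_trans hs'c hce
  have heT : e ≤ T := min_le_right _ _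
  have he0 : 0 ≤ e := le_trans hc0 hce
  have heIcc : e ∈ Icc (0:ℝ) T := ⟨he0, heT⟩
  have hmass : (∫ r in s'..e, |a r|) ≤ 1/2 := by
    have h1 : (∫ r in s'..e, |a r|) = Φ e - Φ s' := by
      simp only [hΦdef]
      rw [← intervalIntegral.integral_add_adjacent_intervals (a := (0:ℝ)) (b := s') (c := e)
        (restrInt T _ habs 0 s' ⟨le_refl 0, le_of_lt hT⟩ hs'Icc)
        (restrInt T _ habs s' e hs'Icc heIcc)]
      ring
    have h2 := hηd s' hs'Icc (by rw [abs_le]; exact ⟨by linarith, by linarith⟩)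
    have h3 := hηd e heIcc (by
      rw [abs_le]
      have := min_le_left (c + η) T
      exact ⟨by linarith, by linarith⟩)
    rw [abs_le] at h2 h3
    rw [h1]; linarith
  have hbound := lemA T a b u S hb_nonneg hu_nonneg hineq s' e ⟨hs'Icc, hs'S⟩ hs'e heT
    (restrInt T _ hb s' e hs'Icc heIcc) (restrInt T _ habs s' e hs'Icc heIcc) hmass
  have heW : e ∈ W := by
    refine ⟨heIcc, max M₀ (2*(u s' + (∫ r in s'..e, b r)) + 2), fun τ hτ => ?_⟩
    rcases le_total τ s' with h | h
    · exact le_trans (hM₀ τ ⟨hτ.1, h⟩) (le_max_left _ _)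
    · exact le_trans (hbound τ ⟨h, hτ.2⟩) (le_max_right _ _)
  have hec : e ≤ c := le_csSup hWbdd heW
  have heT' : e = T := by
    rcases le_total T (c + η) with h | h
    · exact min_eq_right h
    · exfalso
      have h1 : e = c + η := min_eq_left h
      linarith
  exact heT' ▸ heW.2

lemma intInt_mono' (f : ℝ → ℝ) (s τ t : ℝ) (hsτ : s ≤ τ) (hτt : τ ≤ t)
    (hf : IntervalIntegrable f volume s t) (h0 : ∀ r ∈ Icc s t, 0 ≤ f r) :
    (∫ r in τ..t, f r) ≤ ∫ r in s..t, f r := by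
  have h1 : IntervalIntegrable f volume s τ :=
    hf.mono_set (uIcc_subset_uIcc (Icc_subset_uIcc ⟨le_refl s, le_trans hsτ hτt⟩)
      (Icc_subset_uIcc ⟨hsτ, hτt⟩))
  have h2 : IntervalIntegrable f volume τ t :=
    hf.mono_set (uIcc_subset_uIcc (Icc_subset_uIcc ⟨hsτ, hτt⟩)
      (Icc_subset_uIcc ⟨le_trans hsτ hτt, le_refl t⟩))
  have h3 := intervalIntegral.integral_add_adjacent_intervals h1 h2
  have h4 : 0 ≤ ∫ r in s..τ, f r :=
    intervalIntegral.integral_nonneg hsτ (fun x hx => h0 x ⟨hx.1, le_trans hx.2 hτt⟩)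
  linarith

lemma lemKEY (T : ℝ) (a b u : ℝ → ℝ) (S : Set ℝ) (M L : ℝ) (hM0 : 0 ≤ M)
    (ha : IntervalIntegrable a volume 0 T)
    (hb : IntervalIntegrable b volume 0 T)
    (hau : IntervalIntegrable (fun r => a r * u r) volume 0 T)
    (hb_nonneg : ∀ t ∈ Icc (0:ℝ) T, 0 ≤ b t)
    (hu_nonneg : ∀ t ∈ Icc (0:ℝ) T, 0 ≤ u t)
    (hM : ∀ t ∈ Icc (0:ℝ) T, u t ≤ M)
    (hS_null : volume S = 0)
    (hineq : ∀ s ∈ Icc (0:ℝ) T \ S, ∀ t ∈ Icc s T,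
      u t ≤ u s + (∫ r in s..t, a r * u r) + ∫ r in s..t, b r)
    (hA : ∀ x ∈ Icc (0:ℝ) T, |∫ r in (0:ℝ)..x, a r| ≤ L)
    (s t : ℝ) (hs : s ∈ Icc (0:ℝ) T \ S) (ht : t ∈ Icc s T) :
    (Real.exp (-(∫ r in (0:ℝ)..t, a r)) * u t
        - ∫ r in (0:ℝ)..t, Real.exp (-(∫ x in (0:ℝ)..r, a x)) * b r)
      - (Real.exp (-(∫ r in (0:ℝ)..s, a r)) * u s
        - ∫ r in (0:ℝ)..s, Real.exp (-(∫ x in (0:ℝ)..r, a x)) * b r)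
      ≤ Real.exp L * ((∫ r in s..t, |a r|) *
          ((∫ r in s..t, |a r|) * M + (∫ r in s..t, b r) + max (u s - u t) 0)
        + (∫ r in s..t, |a r|) * (∫ r in s..t, b r)) := by
  obtain ⟨⟨hs0, hsT⟩, hsS⟩ := hs
  obtain ⟨hst, htT⟩ := ht
  have ht0 : (0:ℝ) ≤ t := le_trans hs0 hst
  have hT0 : (0:ℝ) ≤ T := le_trans ht0 htT
  have hsI : s ∈ Icc (0:ℝ) T := ⟨hs0, hsT⟩
  have htI : t ∈ Icc (0:ℝ) T := ⟨ht0, htT⟩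
  have hsubI : Icc s t ⊆ Icc (0:ℝ) T := Icc_subset_Icc hs0 htT
  set A : ℝ → ℝ := fun x => ∫ r in (0:ℝ)..x, a r with hAdef
  set δ : ℝ := ∫ r in s..t, |a r| with hδdef
  set B : ℝ := ∫ r in s..t, b r with hBdef
  set D : ℝ := max (u s - u t) 0 with hDdef
  set E : ℝ := δ * M + B + D with hEdef
  -- basic integrability on subintervals
  have habs : IntervalIntegrable (fun r => |a r|) volume 0 T := ha.abs
  have ha_st : IntervalIntegrable a volume s t := restrInt T a ha s t hsI htI
  have habs_st : IntervalIntegrable (fun r => |a r|) volume s t := restrInt T _ habs s t hsI htI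
  have hb_st : IntervalIntegrable b volume s t := restrInt T b hb s t hsI htI
  have hau_st : IntervalIntegrable (fun r => a r * u r) volume s t := restrInt T _ hau s t hsI htI
  have hiabs_st : IntervalIntegrable (fun r => |a r * u r|) volume s t := hau_st.abs
  -- positivity
  have hδ0 : 0 ≤ δ := intervalIntegral.integral_nonneg hst (fun x _ => abs_nonneg _)
  have hB0 : 0 ≤ B := intervalIntegral.integral_nonneg hst (fun x hx => hb_nonneg x (hsubI hx))
  have hD0 : 0 ≤ D := le_max_right _ _
  have hE0 : 0 ≤ E := by positivity
  have hus0 : 0 ≤ u s := hu_nonneg s hsI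
  -- |a u| integral bounded by δ M
  have hauM : (∫ r in s..t, |a r * u r|) ≤ δ * M := by
    have h1 : (∫ r in s..t, |a r * u r|) ≤ ∫ r in s..t, |a r| * M := by
      apply intervalIntegral.integral_mono_on hst hiabs_st (habs_st.mul_const M)
      intro x hx
      rw [abs_mul, abs_of_nonneg (hu_nonneg x (hsubI hx))]
      exact mul_le_mul_of_nonneg_left (hM x (hsubI hx)) (abs_nonneg _)
    rwa [intervalIntegral.integral_mul_const] at h1
  -- upper bound: ∀ τ ∈ [s,t], u τ - u s ≤ δ M + B
  have hupper : ∀ τ ∈ Icc s t, u τ - u s ≤ δ * M + B := by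
    intro τ hτ
    have h1 := hineq s ⟨hsI, hsS⟩ τ ⟨hτ.1, le_trans hτ.2 htT⟩
    have h2 : (∫ r in s..τ, a r * u r) ≤ δ * M := by
      have h3 : IntervalIntegrable (fun r => a r * u r) volume s τ :=
        hau_st.mono_set (uIcc_subset_uIcc (Icc_subset_uIcc ⟨le_refl s, hst⟩)
          (Icc_subset_uIcc hτ))
      calc (∫ r in s..τ, a r * u r) ≤ |∫ r in s..τ, a r * u r| := le_abs_self _
        _ ≤ ∫ r in s..τ, |a r * u r| := intervalIntegral.abs_integral_le_integral_abs hτ.1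
        _ ≤ ∫ r in s..t, |a r * u r| :=
            intInt_mono _ s τ t hτ.1 hτ.2 hiabs_st (fun x _ => abs_nonneg _)
        _ ≤ δ * M := hauM
    have h4 : (∫ r in s..τ, b r) ≤ B :=
      intInt_mono b s τ t hτ.1 hτ.2 hb_st (fun x hx => hb_nonneg x (hsubI hx))
    linarith
  -- lower bound a.e.
  have hlower : ∀ᵐ τ ∂(volume.restrict (Icc s t)), u s - E ≤ u τ := by
    have hae1 : ∀ᵐ τ ∂(volume.restrict (Icc s t)), τ ∉ S := by
      rw [ae_iff]
      have : {τ | ¬ τ ∉ S} = S := by ext z; simp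
      rw [this]
      exact le_antisymm (le_trans (Measure.restrict_le_self S) hS_null.le) zero_le
    have hae2 : ∀ᵐ τ ∂(volume.restrict (Icc s t)), τ ∈ Icc s t :=
      ae_restrict_mem measurableSet_Icc
    filter_upwards [hae1, hae2] with τ hτS hτI
    have h1 := hineq τ ⟨hsubI hτI, hτS⟩ t ⟨hτI.2, htT⟩
    have h2 : (∫ r in τ..t, a r * u r) ≤ δ * M := by
      calc (∫ r in τ..t, a r * u r) ≤ |∫ r in τ..t, a r * u r| := le_abs_self _
        _ ≤ ∫ r in τ..t, |a r * u r| := intervalIntegral.abs_integral_le_integral_abs hτI.2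
        _ ≤ ∫ r in s..t, |a r * u r| :=
            intInt_mono' _ s τ t hτI.1 hτI.2 hiabs_st (fun x _ => abs_nonneg _)
        _ ≤ δ * M := hauM
    have h3 : (∫ r in τ..t, b r) ≤ B :=
      intInt_mono' b s τ t hτI.1 hτI.2 hb_st (fun x hx => hb_nonneg x (hsubI hx))
    have h4 : u s - u t ≤ D := le_max_left _ _
    simp only [hEdef]
    linarith
  -- a.e. two-sided bound
  have hdev : ∀ᵐ τ ∂(volume.restrict (Icc s t)), |u τ - u s| ≤ E := by
    have hae2 : ∀ᵐ τ ∂(volume.restrict (Icc s t)), τ ∈ Icc s t :=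
      ae_restrict_mem measurableSet_Icc
    filter_upwards [hlower, hae2] with τ h1 h2
    rw [abs_le]
    constructor
    · linarith
    · have := hupper τ h2
      simp only [hEdef]
      linarith
  -- integrability of a * (u - u s)
  have hdiff_int : IntervalIntegrable (fun r => a r * (u r - u s)) volume s t := by
    have heq : (fun r => a r * (u r - u s)) = fun r => a r * u r - a r * u s :=
      funext fun r => by ring
    rw [heq]
    exact hau_st.sub (ha_st.mul_const (u s))
  -- F8
  have h8 : (∫ r in s..t, a r * (u r - u s)) ≤ δ * E := by
    calc (∫ r in s..t, a r * (u r - u s)) ≤ |∫ r in s..t, a r * (u r - u s)| := le_abs_self _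
      _ ≤ ∫ r in s..t, |a r * (u r - u s)| := intervalIntegral.abs_integral_le_integral_abs hst
      _ ≤ ∫ r in s..t, |a r| * E := by
          apply intervalIntegral.integral_mono_ae_restrict hst hdiff_int.abs
            (habs_st.mul_const E)
          filter_upwards [hdev] with τ hτ
          rw [abs_mul]
          exact mul_le_mul_of_nonneg_left hτ (abs_nonneg _)
      _ = δ * E := intervalIntegral.integral_mul_const _ _
  set X : ℝ := ∫ r in s..t, a r with hXdef
  have hXδ : |X| ≤ δ := intervalIntegral.abs_integral_le_integral_abs hst
  have hsplit : (∫ r in s..t, a r * u r) = X * u s + ∫ r in s..t, a r * (u r - u s) := by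
    have h1 : (fun r => a r * u r) = fun r => a r * u s + a r * (u r - u s) :=
      funext fun r => by ring
    rw [h1, intervalIntegral.integral_add (ha_st.mul_const (u s)) hdiff_int,
      intervalIntegral.integral_mul_const]
  have hadd : A s + X = A t :=
    intervalIntegral.integral_add_adjacent_intervals
      (restrInt T a ha 0 s ⟨le_refl 0, hT0⟩ hsI) ha_st
  have hAs : |A s| ≤ L := hA s hsI
  have hAt : |A t| ≤ L := hA t htI
  have hAr : ∀ r ∈ Icc s t, |A t - A r| ≤ δ := by
    intro r hr
    have ha_rt : IntervalIntegrable a volume r t := restrInt T a ha r t (hsubI hr) htI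
    have h1 : A r + (∫ x in r..t, a x) = A t :=
      intervalIntegral.integral_add_adjacent_intervals
        (restrInt T a ha 0 r ⟨le_refl 0, hT0⟩ (hsubI hr)) ha_rt
    have h2 : |∫ x in r..t, a x| ≤ ∫ x in r..t, |a x| :=
      intervalIntegral.abs_integral_le_integral_abs hr.2
    have h3 : (∫ x in r..t, |a x|) ≤ δ :=
      intInt_mono' _ s r t hr.1 hr.2 habs_st (fun x _ => abs_nonneg _)
    have h4 : A t - A r = ∫ x in r..t, a x := by linarith
    rw [h4]; linarith
  set Es : ℝ := Real.exp (-A s) with hEsdef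
  set Et : ℝ := Real.exp (-A t) with hEtdef
  set eL : ℝ := Real.exp L with heLdef
  have hEt_pos : 0 < Et := Real.exp_pos _
  have hEs_pos : 0 < Es := Real.exp_pos _
  have heL_pos : 0 < eL := Real.exp_pos _
  have hEt_le : Et ≤ eL := Real.exp_le_exp.2 (by have := abs_le.1 hAt; linarith [this.1])
  -- F12
  have hF12 : Et * (1 + X) ≤ Es := by
    have h1 : -A t = -A s + -X := by rw [← hadd]; ring
    have h2 : Et = Es * Real.exp (-X) := by rw [hEtdef, h1, Real.exp_add, hEsdef]
    have h3 : Real.exp (-X) * (1 + X) ≤ 1 := by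
      have h4 := Real.add_one_le_exp X
      have h5 : Real.exp (-X) * (1 + X) ≤ Real.exp (-X) * Real.exp X :=
        mul_le_mul_of_nonneg_left (by linarith) (Real.exp_pos _).le
      rwa [← Real.exp_add, neg_add_cancel, Real.exp_zero] at h5
    calc Et * (1 + X) = Es * (Real.exp (-X) * (1 + X)) := by rw [h2]; ring
      _ ≤ Es * 1 := mul_le_mul_of_nonneg_left h3 hEs_pos.le
      _ = Es := mul_one _
  -- continuity of exp(-A)
  have hAcont : ContinuousOn A (Icc 0 T) := by
    have := intervalIntegral.continuousOn_primitive_interval'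
      (f := a) (μ := volume) (a := 0) (b₁ := 0) (b₂ := T) ha
      (by rw [uIcc_of_le hT0]; exact ⟨le_refl 0, hT0⟩)
    rwa [uIcc_of_le hT0] at this
  have hgcont : ContinuousOn (fun r => Real.exp (-A r)) (Icc 0 T) :=
    Real.continuous_exp.comp_continuousOn hAcont.neg
  have hExpb : IntervalIntegrable (fun r => Real.exp (-A r) * b r) volume 0 T := by
    apply hb.continuousOn_mul
    rwa [uIcc_of_le hT0]
  have hExpb_st : IntervalIntegrable (fun r => Real.exp (-A r) * b r) volume s t :=
    restrInt T _ hExpb s t hsI htI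
  -- F13
  have hF13 : Et * B - (∫ r in s..t, Real.exp (-A r) * b r) ≤ eL * δ * B := by
    have h1 : Et * B = ∫ r in s..t, Et * b r :=
      (intervalIntegral.integral_const_mul _ _).symm
    have h2 : (∫ r in s..t, Et * b r) - (∫ r in s..t, Real.exp (-A r) * b r)
        = ∫ r in s..t, (Et - Real.exp (-A r)) * b r := by
      rw [← intervalIntegral.integral_sub (hb_st.const_mul Et) hExpb_st]
      congr 1
      funext r
      ring
    have h3 : (∫ r in s..t, (Et - Real.exp (-A r)) * b r)
        ≤ ∫ r in s..t, (eL * δ) * b r := by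
      have hsubint : IntervalIntegrable (fun r => (Et - Real.exp (-A r)) * b r) volume s t := by
        simpa [sub_mul] using (hb_st.const_mul Et).sub hExpb_st
      apply intervalIntegral.integral_mono_on hst hsubint (hb_st.const_mul (eL * δ))
      intro r hr
      have h4 : Et - Real.exp (-A r) ≤ eL * δ := by
        have h5 : |(-A r)| ≤ L := by rw [abs_neg]; exact hA r (hsubI hr)
        have h6 := exp_diff_le (-A t) (-A r) L (by rwa [abs_neg]) h5
        have h7 : |(-A t) - (-A r)| = |A t - A r| := by rw [← abs_neg]; congr 1; ring
        rw [h7] at h6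
        calc Et - Real.exp (-A r) ≤ eL * |A t - A r| := h6
          _ ≤ eL * δ := mul_le_mul_of_nonneg_left (hAr r hr) heL_pos.le
      have h8' : (Et - Real.exp (-A r)) * b r ≤ (eL * δ) * b r :=
        mul_le_mul_of_nonneg_right h4 (hb_nonneg r (hsubI hr))
      exact h8'
    have h4 : (∫ r in s..t, (eL * δ) * b r) = eL * δ * B :=
      intervalIntegral.integral_const_mul _ _
    linarith
  -- additivity of the exp(-A) b primitive
  have hIadd : (∫ r in (0:ℝ)..s, Real.exp (-A r) * b r) + (∫ r in s..t, Real.exp (-A r) * b r)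
      = ∫ r in (0:ℝ)..t, Real.exp (-A r) * b r :=
    intervalIntegral.integral_add_adjacent_intervals
      (restrInt T _ hExpb 0 s ⟨le_refl 0, hT0⟩ hsI) hExpb_st
  -- main inequality
  have hmain := hineq s ⟨hsI, hsS⟩ t ⟨hst, htT⟩
  rw [hsplit] at hmain
  -- Et * (∫ a (u - u s)) ≤ eL * (δ * E)
  have hmid : Et * (∫ r in s..t, a r * (u r - u s)) ≤ eL * (δ * E) := by
    rcases le_or_gt (∫ r in s..t, a r * (u r - u s)) 0 with h | h
    · have h1 : Et * (∫ r in s..t, a r * (u r - u s)) ≤ 0 := mul_nonpos_of_nonneg_of_nonpos hEt_pos.le h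
      have h2 : (0:ℝ) ≤ eL * (δ * E) := by positivity
      linarith
    · calc Et * (∫ r in s..t, a r * (u r - u s)) ≤ eL * (∫ r in s..t, a r * (u r - u s)) :=
          mul_le_mul_of_nonneg_right hEt_le h.le
        _ ≤ eL * (δ * E) := mul_le_mul_of_nonneg_left h8 heL_pos.le
  -- assemble
  have hEtu : Et * u t ≤ Et * (u s + (X * u s + ∫ r in s..t, a r * (u r - u s)) + B) :=
    mul_le_mul_of_nonneg_left hmain hEt_pos.le
  have hfinal : Et * u t - Es * u s - (∫ r in s..t, Real.exp (-A r) * b r)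
      ≤ eL * (δ * E) + eL * δ * B := by
    have hc1 : (Et * (1 + X) - Es) * u s ≤ 0 :=
      mul_nonpos_of_nonpos_of_nonneg (by linarith) hus0
    nlinarith [hF13, hmid, hEtu]
  have hgoal : (Et * u t - ∫ r in (0:ℝ)..t, Real.exp (-A r) * b r)
      - (Es * u s - ∫ r in (0:ℝ)..s, Real.exp (-A r) * b r)
      = Et * u t - Es * u s - (∫ r in s..t, Real.exp (-A r) * b r) := by
    rw [← hIadd]; ring
  rw [hEdef] at hfinal
  calc (Et * u t - ∫ r in (0:ℝ)..t, Real.exp (-A r) * b r)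
      - (Es * u s - ∫ r in (0:ℝ)..s, Real.exp (-A r) * b r)
      = Et * u t - Es * u s - (∫ r in s..t, Real.exp (-A r) * b r) := hgoal
    _ ≤ eL * (δ * (δ * M + B + D)) + eL * δ * B := by rw [← hEdef]; exact hfinal
    _ = eL * (δ * (δ * M + B + D) + δ * B) := by ring

lemma max_sub_identity (x y : ℝ) : max (x - y) 0 = max (y - x) 0 + (x - y) := by
  rcases le_total x y with h | h
  · rw [max_eq_right (by linarith), max_eq_left (by linarith)]; ring
  · rw [max_eq_left (by linarith), max_eq_right (by linarith)]; ring

lemma lemSUM (T : ℝ) (hT : 0 < T) (u v Φ Ψ : ℝ → ℝ) (S : Set ℝ)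
    (hS_null : volume S = 0) (h0S : (0:ℝ) ∉ S)
    (M eL : ℝ) (hM0 : 0 ≤ M) (heL0 : 0 < eL)
    (hΦc : ContinuousOn Φ (Icc 0 T))
    (hΦmono : ∀ x y, x ∈ Icc (0:ℝ) T → y ∈ Icc (0:ℝ) T → x ≤ y → Φ x ≤ Φ y)
    (hΨmono : ∀ x y, x ∈ Icc (0:ℝ) T → y ∈ Icc (0:ℝ) T → x ≤ y → Ψ x ≤ Ψ y)
    (hu0 : ∀ t ∈ Icc (0:ℝ) T, 0 ≤ u t) (hM : ∀ t ∈ Icc (0:ℝ) T, u t ≤ M)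
    (key : ∀ s t, s ∈ Icc (0:ℝ) T \ S → t ∈ Icc s T →
      v t - v s ≤ eL * ((Φ t - Φ s) * ((Φ t - Φ s) * M + (Ψ t - Ψ s) + max (u s - u t) 0)
        + (Φ t - Φ s) * (Ψ t - Ψ s)))
    (hstep : ∀ s t, s ∈ Icc (0:ℝ) T \ S → t ∈ Icc s T →
      u t - u s ≤ (Φ t - Φ s) * M + (Ψ t - Ψ s)) :
    v T ≤ v 0 := by
  set LΦ := Φ T - Φ 0 with hLΦ
  set β := Ψ T - Ψ 0 with hβ
  have hTIcc : T ∈ Icc (0:ℝ) T := ⟨hT.le, le_refl T⟩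
  have h0Icc : (0:ℝ) ∈ Icc (0:ℝ) T := ⟨le_refl 0, hT.le⟩
  have hLΦ0 : 0 ≤ LΦ := sub_nonneg.2 (hΦmono 0 T h0Icc hTIcc hT.le)
  have hβ0 : 0 ≤ β := sub_nonneg.2 (hΨmono 0 T h0Icc hTIcc hT.le)
  set C := eL * (M * LΦ + 2*β + (M * LΦ + β) + M) with hC
  have hC0 : 0 ≤ C := by positivity
  have hmain : ∀ ε : ℝ, 0 < ε → v T - v 0 ≤ C * ε := by
    intro ε hε
    -- uniform continuity of Φ
    obtain ⟨η, hη0, hηd⟩ : ∃ η > 0, ∀ x ∈ Icc (0:ℝ) T, ∀ y ∈ Icc (0:ℝ) T,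
        |x - y| ≤ η → |Φ x - Φ y| ≤ ε := by
      have h1 := isCompact_Icc.uniformContinuousOn_of_continuous hΦc
      rw [Metric.uniformContinuousOn_iff] at h1
      obtain ⟨δ', hδ'0, hδ'⟩ := h1 ε hε
      refine ⟨δ'/2, by linarith, fun x hx y hy hxy => ?_⟩
      have := hδ' x hx y hy (by rw [Real.dist_eq]; linarith)
      rw [Real.dist_eq] at this
      exact this.le
    -- choose n
    obtain ⟨n, hn0, hnη⟩ : ∃ n : ℕ, 0 < n ∧ 2*T/n ≤ η := by
      obtain ⟨n, hn⟩ := exists_nat_gt (2*T/η)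
      have hn0 : 0 < n := by
        by_contra h
        push_neg at h
        interval_cases n
        · simp at hn; nlinarith [div_nonneg (by linarith : (0:ℝ) ≤ 2*T) hη0.le]
      refine ⟨n, hn0, ?_⟩
      rw [div_le_iff₀ (by exact_mod_cast hn0)]
      rw [div_lt_iff₀ hη0] at hn
      nlinarith
    have hnR : (0:ℝ) < n := by exact_mod_cast hn0
    -- pick partition points
    have hpickEx : ∀ i : ℕ, ∃ z, z ∈ Ioo ((i:ℝ)*T/n) (((i:ℝ)+1)*T/n) ∧ z ∉ S := by
      intro i
      apply pick_good S hS_null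
      rw [div_lt_div_iff₀ hnR hnR]
      nlinarith [Nat.cast_nonneg (α := ℝ) i]
    choose z hzmem hzS using hpickEx
    set f : ℕ → ℝ := fun i => if i = 0 then 0 else if i < n then z i else T with hfdef
    have hf0 : f 0 = 0 := by simp [hfdef]
    have hfn : f n = T := by simp [hfdef, hn0.ne']
    have hwin : ∀ i ≤ n, (i:ℝ)*T/n ≤ f i ∧ f i ≤ ((i:ℝ)+1)*T/n := by
      intro i hi
      by_cases h0 : i = 0
      · subst h0
        simp only [hfdef, if_pos rfl]
        norm_num
        positivity
      · by_cases h1 : i < n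
        · simp only [hfdef, if_neg h0, if_pos h1]
          exact ⟨(hzmem i).1.le, (hzmem i).2.le⟩
        · have hin : i = n := le_antisymm hi (not_lt.1 h1)
          subst hin
          simp only [hfdef, if_neg h0, if_neg h1]
          constructor
          · rw [div_le_iff₀ hnR]; nlinarith
          · rw [le_div_iff₀ hnR]; nlinarith
    have hIcc : ∀ i ≤ n, f i ∈ Icc (0:ℝ) T := by
      intro i hi
      rcases lt_or_eq_of_le hi with h | h
      · obtain ⟨hl, hr⟩ := hwin i hi
        constructor
        · have : (0:ℝ) ≤ (i:ℝ)*T/n := by positivity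
          linarith
        · have h2 : ((i:ℝ)+1)*T/n ≤ T := by
            rw [div_le_iff₀ hnR]
            have : ((i:ℝ)+1) ≤ (n:ℝ) := by exact_mod_cast h
            nlinarith
          linarith
      · subst h; rw [hfn]; exact hTIcc
    have hmono : ∀ i, i < n → f i ≤ f (i+1) := by
      intro i hi
      have h1 := (hwin i hi.le).2
      have h2 := (hwin (i+1) hi).1
      push_cast at h2
      linarith
    have hgood : ∀ i, i < n → f i ∈ Icc (0:ℝ) T \ S := by
      intro i hi
      refine ⟨hIcc i hi.le, ?_⟩
      by_cases h0 : i = 0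
      · subst h0; rw [hf0]; exact h0S
      · simp only [hfdef, if_neg h0, if_pos hi]; exact hzS i
    have hgap : ∀ i, i < n → f (i+1) - f i ≤ η := by
      intro i hi
      have h1 := (hwin i hi.le).1
      have h2 := (hwin (i+1) hi).2
      push_cast at h2
      have h3 : ((i:ℝ)+1+1)*T/n - (i:ℝ)*T/n = 2*T/n := by ring
      linarith
    have hΦgap : ∀ i, i < n → Φ (f (i+1)) - Φ (f i) ≤ ε := by
      intro i hi
      have h1 := hηd (f (i+1)) (hIcc (i+1) hi) (f i) (hIcc i hi.le)
        (by rw [abs_le]; constructor <;> [linarith [hgap i hi, hmono i hi]; linarith [hgap i hi]])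
      rw [abs_le] at h1
      exact h1.2
    -- telescoping
    have hsum : v T - v 0 = ∑ i ∈ Finset.range n, (v (f (i+1)) - v (f i)) := by
      rw [Finset.sum_range_sub (fun i => v (f i)), hfn, hf0]
    have hterm : ∀ i ∈ Finset.range n,
        v (f (i+1)) - v (f i) ≤ eL * ε * ((M * (Φ (f (i+1)) - Φ (f i))
          + 2 * (Ψ (f (i+1)) - Ψ (f i)))
          + (max (u (f (i+1)) - u (f i)) 0 + (u (f i) - u (f (i+1))))) := by
      intro i hi
      rw [Finset.mem_range] at hi
      have hik := key (f i) (f (i+1)) (hgood i hi) ⟨hmono i hi, (hIcc (i+1) hi).2⟩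
      set δi := Φ (f (i+1)) - Φ (f i) with hδi
      set Bi := Ψ (f (i+1)) - Ψ (f i) with hBi
      have hδi0 : 0 ≤ δi := sub_nonneg.2 (hΦmono _ _ (hIcc i hi.le) (hIcc (i+1) hi) (hmono i hi))
      have hBi0 : 0 ≤ Bi := sub_nonneg.2 (hΨmono _ _ (hIcc i hi.le) (hIcc (i+1) hi) (hmono i hi))
      have hδiε : δi ≤ ε := hΦgap i hi
      have hD0 : (0:ℝ) ≤ max (u (f i) - u (f (i+1))) 0 := le_max_right _ _
      have h2 : δi * (δi * M + Bi + max (u (f i) - u (f (i+1))) 0) + δi * Bi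
          ≤ ε * ((M * δi + 2 * Bi) + max (u (f i) - u (f (i+1))) 0) := by
        nlinarith [mul_nonneg (mul_nonneg (sub_nonneg.2 hδiε) hM0) hδi0,
          mul_nonneg (sub_nonneg.2 hδiε) hBi0, mul_nonneg (sub_nonneg.2 hδiε) hD0]
      have heq : max (u (f i) - u (f (i+1))) 0
          = max (u (f (i+1)) - u (f i)) 0 + (u (f i) - u (f (i+1))) :=
        max_sub_identity _ _
      calc v (f (i+1)) - v (f i)
          ≤ eL * (δi * (δi * M + Bi + max (u (f i) - u (f (i+1))) 0) + δi * Bi) := hik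
        _ ≤ eL * (ε * ((M * δi + 2 * Bi) + max (u (f i) - u (f (i+1))) 0)) :=
            mul_le_mul_of_nonneg_left h2 heL0.le
        _ = eL * ε * ((M * δi + 2 * Bi) + (max (u (f (i+1)) - u (f i)) 0
            + (u (f i) - u (f (i+1))))) := by rw [heq]; ring
    have hsum2 : v T - v 0 ≤ eL * ε * ((M * LΦ + 2 * β)
        + ((∑ i ∈ Finset.range n, max (u (f (i+1)) - u (f i)) 0) + (u 0 - u T))) := by
      rw [hsum]
      calc (∑ i ∈ Finset.range n, (v (f (i+1)) - v (f i)))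
          ≤ ∑ i ∈ Finset.range n, eL * ε * ((M * (Φ (f (i+1)) - Φ (f i))
            + 2 * (Ψ (f (i+1)) - Ψ (f i)))
            + (max (u (f (i+1)) - u (f i)) 0 + (u (f i) - u (f (i+1))))) :=
            Finset.sum_le_sum hterm
        _ = eL * ε * ((M * (∑ i ∈ Finset.range n, (Φ (f (i+1)) - Φ (f i)))
            + 2 * (∑ i ∈ Finset.range n, (Ψ (f (i+1)) - Ψ (f i))))
            + ((∑ i ∈ Finset.range n, max (u (f (i+1)) - u (f i)) 0)
              + (∑ i ∈ Finset.range n, (u (f i) - u (f (i+1)))))) := by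
            rw [← Finset.mul_sum]
            congr 1
            rw [Finset.sum_add_distrib, Finset.sum_add_distrib, Finset.sum_add_distrib,
              ← Finset.mul_sum, ← Finset.mul_sum]
        _ = eL * ε * ((M * LΦ + 2 * β)
            + ((∑ i ∈ Finset.range n, max (u (f (i+1)) - u (f i)) 0) + (u 0 - u T))) := by
            rw [Finset.sum_range_sub (fun i => Φ (f i)), Finset.sum_range_sub (fun i => Ψ (f i)),
              Finset.sum_range_sub' (fun i => u (f i)), hfn, hf0]
    have hDsum : (∑ i ∈ Finset.range n, max (u (f (i+1)) - u (f i)) 0) ≤ M * LΦ + β := by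
      calc (∑ i ∈ Finset.range n, max (u (f (i+1)) - u (f i)) 0)
          ≤ ∑ i ∈ Finset.range n, ((Φ (f (i+1)) - Φ (f i)) * M + (Ψ (f (i+1)) - Ψ (f i))) := by
            apply Finset.sum_le_sum
            intro i hi
            rw [Finset.mem_range] at hi
            have h1 := hstep (f i) (f (i+1)) (hgood i hi) ⟨hmono i hi, (hIcc (i+1) hi).2⟩
            have h2 : (0:ℝ) ≤ (Φ (f (i+1)) - Φ (f i)) * M + (Ψ (f (i+1)) - Ψ (f i)) := by
              have hδi0 : 0 ≤ Φ (f (i+1)) - Φ (f i) :=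
                sub_nonneg.2 (hΦmono _ _ (hIcc i hi.le) (hIcc (i+1) hi) (hmono i hi))
              have hBi0 : 0 ≤ Ψ (f (i+1)) - Ψ (f i) :=
                sub_nonneg.2 (hΨmono _ _ (hIcc i hi.le) (hIcc (i+1) hi) (hmono i hi))
              nlinarith [mul_nonneg hδi0 hM0]
            exact max_le h1 h2
        _ = (∑ i ∈ Finset.range n, (Φ (f (i+1)) - Φ (f i))) * M
            + (∑ i ∈ Finset.range n, (Ψ (f (i+1)) - Ψ (f i))) := by
            rw [Finset.sum_add_distrib, ← Finset.sum_mul]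
        _ = M * LΦ + β := by
            rw [Finset.sum_range_sub (fun i => Φ (f i)), Finset.sum_range_sub (fun i => Ψ (f i)),
              hfn, hf0]
            ring
    have huT : u 0 - u T ≤ M := by
      have h1 := hu0 T hTIcc
      have h2 := hM 0 h0Icc
      linarith
    have hfin : (M * LΦ + 2 * β) + ((∑ i ∈ Finset.range n, max (u (f (i+1)) - u (f i)) 0)
        + (u 0 - u T)) ≤ M * LΦ + 2*β + (M * LΦ + β) + M := by linarith
    calc v T - v 0 ≤ _ := hsum2
      _ ≤ eL * ε * (M * LΦ + 2*β + (M * LΦ + β) + M) := by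
          apply mul_le_mul_of_nonneg_left hfin (by positivity)
      _ = C * ε := by rw [hC]; ring
  by_contra hcon
  push_neg at hcon
  have h1 := hmain ((v T - v 0)/(2*(C+1))) (div_pos (by linarith) (by linarith))
  have h2 : C * ((v T - v 0)/(2*(C+1))) < v T - v 0 := by
    rw [div_eq_mul_inv]
    have h3 : C / (2*(C+1)) < 1 := by
      rw [div_lt_one (by linarith)]
      linarith
    calc C * ((v T - v 0) * (2*(C+1))⁻¹) = (C / (2*(C+1))) * (v T - v 0) := by
          rw [div_eq_mul_inv]; ring
      _ < 1 * (v T - v 0) := by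
          apply mul_lt_mul_of_pos_right h3 (by linarith)
      _ = v T - v 0 := one_mul _
  linarith

theorem gronwall_variant (T : ℝ) (hT : 0 < T) (a b : ℝ → ℝ)
    (ha : IntervalIntegrable a volume 0 T)
    (hb : IntervalIntegrable b volume 0 T)
    (hb_nonneg : ∀ t ∈ Icc (0:ℝ) T, 0 ≤ b t)
    (u : ℝ → ℝ)
    (hu_lsc : LowerSemicontinuousOn u (Icc 0 T))
    (hu_nonneg : ∀ t ∈ Icc (0:ℝ) T, 0 ≤ u t)
    (S : Set ℝ) (hS : S ⊆ Ioc 0 T) (hS_null : volume S = 0)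
    (hineq : ∀ s ∈ Icc (0:ℝ) T \ S, ∀ t ∈ Icc s T,
      u t ≤ u s + (∫ r in s..t, a r * u r) + ∫ r in s..t, b r) :
    u T ≤ u 0 * Real.exp (∫ s in (0:ℝ)..T, a s)
      + ∫ s in (0:ℝ)..T, b s * Real.exp (∫ r in s..T, a r) := by
  have hT0 : (0:ℝ) ≤ T := hT.le
  have h0S : (0:ℝ) ∉ S := fun h => lt_irrefl 0 (hS h).1
  -- measurability of u
  have hu_meas : AEStronglyMeasurable u (volume.restrict (Icc 0 T)) := by
    have h1 : LowerSemicontinuous ((Icc (0:ℝ) T).restrict u) := by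
      rintro ⟨x, hx⟩ y hy
      have h0 := hu_lsc x hx y hy
      rw [nhdsWithin, Filter.eventually_inf_principal] at h0
      rw [nhds_subtype_eq_comap]
      exact Filter.eventually_comap.2 (h0.mono (by rintro z hz ⟨w, hw⟩ rfl; exact hz hw))
    have h2 : Measurable ((Icc (0:ℝ) T).restrict u) := h1.measurable
    rw [← map_comap_subtype_coe measurableSet_Icc]
    rw [(MeasurableEmbedding.subtype_coe measurableSet_Icc).aestronglyMeasurable_map_iff]
    exact h2.aestronglyMeasurable
  -- global bound on u
  obtain ⟨M₀, hM₀⟩ := lemB T hT a b u S ha hb hb_nonneg hu_nonneg hS hS_null hineq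
  set M := max M₀ 0 with hMdef
  have hM : ∀ t ∈ Icc (0:ℝ) T, u t ≤ M := fun t ht => le_trans (hM₀ t ht) (le_max_left _ _)
  have hM0 : (0:ℝ) ≤ M := le_max_right _ _
  -- integrability of a * u
  have hau : IntervalIntegrable (fun r => a r * u r) volume 0 T :=
    lemC T a u M ha hT0 hu_meas hu_nonneg hM
  have habs : IntervalIntegrable (fun r => |a r|) volume 0 T := ha.abs
  set L : ℝ := ∫ r in (0:ℝ)..T, |a r| with hLdef
  have hA : ∀ x ∈ Icc (0:ℝ) T, |∫ r in (0:ℝ)..x, a r| ≤ L := by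
    intro x hx
    calc |∫ r in (0:ℝ)..x, a r| ≤ ∫ r in (0:ℝ)..x, |a r| :=
        intervalIntegral.abs_integral_le_integral_abs hx.1
      _ ≤ L := intInt_mono _ 0 x T hx.1 hx.2 habs (fun r _ => abs_nonneg _)
  -- Φ and Ψ primitives
  have hΦmono : ∀ x y, x ∈ Icc (0:ℝ) T → y ∈ Icc (0:ℝ) T → x ≤ y →
      (∫ r in (0:ℝ)..x, |a r|) ≤ ∫ r in (0:ℝ)..y, |a r| := by
    intro x y hx hy hxy
    have h1 := primdiff T _ habs x y hx hy
    have h2 : 0 ≤ ∫ r in x..y, |a r| :=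
      intervalIntegral.integral_nonneg hxy (fun r _ => abs_nonneg _)
    linarith
  have hΨmono : ∀ x y, x ∈ Icc (0:ℝ) T → y ∈ Icc (0:ℝ) T → x ≤ y →
      (∫ r in (0:ℝ)..x, b r) ≤ ∫ r in (0:ℝ)..y, b r := by
    intro x y hx hy hxy
    have h1 := primdiff T b hb x y hx hy
    have h2 : 0 ≤ ∫ r in x..y, b r :=
      intervalIntegral.integral_nonneg hxy (fun r hr => hb_nonneg r ⟨le_trans hx.1 hr.1, le_trans hr.2 hy.2⟩)
    linarith
  have hΦc : ContinuousOn (fun x => ∫ r in (0:ℝ)..x, |a r|) (Icc 0 T) := by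
    have := intervalIntegral.continuousOn_primitive_interval'
      (f := fun r => |a r|) (μ := volume) (a := 0) (b₁ := 0) (b₂ := T) habs
      (by rw [uIcc_of_le hT0]; exact ⟨le_refl 0, hT0⟩)
    rwa [uIcc_of_le hT0] at this
  -- key estimate in primitive form
  have key : ∀ s t, s ∈ Icc (0:ℝ) T \ S → t ∈ Icc s T →
      (Real.exp (-(∫ r in (0:ℝ)..t, a r)) * u t
        - ∫ r in (0:ℝ)..t, Real.exp (-(∫ x in (0:ℝ)..r, a x)) * b r)
      - (Real.exp (-(∫ r in (0:ℝ)..s, a r)) * u s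
        - ∫ r in (0:ℝ)..s, Real.exp (-(∫ x in (0:ℝ)..r, a x)) * b r)
      ≤ Real.exp L * (((∫ r in (0:ℝ)..t, |a r|) - ∫ r in (0:ℝ)..s, |a r|) *
          (((∫ r in (0:ℝ)..t, |a r|) - ∫ r in (0:ℝ)..s, |a r|) * M
            + ((∫ r in (0:ℝ)..t, b r) - ∫ r in (0:ℝ)..s, b r) + max (u s - u t) 0)
        + ((∫ r in (0:ℝ)..t, |a r|) - ∫ r in (0:ℝ)..s, |a r|)
          * ((∫ r in (0:ℝ)..t, b r) - ∫ r in (0:ℝ)..s, b r)) := by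
    intro s t hs ht
    have hsI : s ∈ Icc (0:ℝ) T := hs.1
    have htI : t ∈ Icc (0:ℝ) T := ⟨le_trans hsI.1 ht.1, ht.2⟩
    have h1 := lemKEY T a b u S M L hM0 ha hb hau hb_nonneg hu_nonneg hM hS_null hineq hA s t hs ht
    rwa [primdiff T _ habs s t hsI htI, primdiff T b hb s t hsI htI] at h1
  have hstep : ∀ s t, s ∈ Icc (0:ℝ) T \ S → t ∈ Icc s T →
      u t - u s ≤ ((∫ r in (0:ℝ)..t, |a r|) - ∫ r in (0:ℝ)..s, |a r|) * M
        + ((∫ r in (0:ℝ)..t, b r) - ∫ r in (0:ℝ)..s, b r) := by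
    intro s t hs ht
    have hsI : s ∈ Icc (0:ℝ) T := hs.1
    have htI : t ∈ Icc (0:ℝ) T := ⟨le_trans hsI.1 ht.1, ht.2⟩
    have h1 := lemUP T a b u S M ha hb hau hu_nonneg hM hineq s t hs ht
    rwa [primdiff T _ habs s t hsI htI, primdiff T b hb s t hsI htI] at h1
  -- apply the summation lemma
  have hvT := lemSUM T hT u
    (fun x => Real.exp (-(∫ r in (0:ℝ)..x, a r)) * u x
      - ∫ r in (0:ℝ)..x, Real.exp (-(∫ w in (0:ℝ)..r, a w)) * b r)
    (fun x => ∫ r in (0:ℝ)..x, |a r|) (fun x => ∫ r in (0:ℝ)..x, b r)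
    S hS_null h0S M (Real.exp L) hM0 (Real.exp_pos L) hΦc hΦmono hΨmono hu_nonneg hM key hstep
  simp only [] at hvT
  -- final algebra
  rw [intervalIntegral.integral_same, neg_zero, Real.exp_zero, one_mul,
    intervalIntegral.integral_same, sub_zero] at hvT
  set I : ℝ := ∫ r in (0:ℝ)..T, Real.exp (-(∫ w in (0:ℝ)..r, a w)) * b r with hIdef
  set AT : ℝ := ∫ r in (0:ℝ)..T, a r with hATdef
  have hgoal2 : (∫ s in (0:ℝ)..T, b s * Real.exp (∫ r in s..T, a r)) = Real.exp AT * I := by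
    rw [hIdef, ← intervalIntegral.integral_const_mul]
    apply intervalIntegral.integral_congr
    intro x hx
    rw [uIcc_of_le hT0] at hx
    show b x * Real.exp (∫ r in x..T, a r)
      = Real.exp AT * (Real.exp (-(∫ w in (0:ℝ)..x, a w)) * b x)
    have h1 : (∫ r in x..T, a r) = AT - ∫ r in (0:ℝ)..x, a r :=
      primdiff T a ha x T hx ⟨hT0, le_refl T⟩
    rw [h1, show AT - (∫ r in (0:ℝ)..x, a r) = AT + -(∫ r in (0:ℝ)..x, a r) by ring,
      Real.exp_add]
    ring
  rw [hgoal2]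
  have hexpT : 0 < Real.exp AT := Real.exp_pos _
  have h2 : Real.exp AT * (Real.exp (-AT) * u T) = u T := by
    rw [← mul_assoc, ← Real.exp_add]
    simp
  calc u T = Real.exp AT * (Real.exp (-AT) * u T) := h2.symm
    _ ≤ Real.exp AT * (u 0 + I) := by
        apply mul_le_mul_of_nonneg_left (by linarith) hexpT.le
    _ = u 0 * Real.exp AT + Real.exp AT * I := by ring
end

section
/- The double series Σ_{n∈ℤ} (Σ_{k∈ℤ, k≠0, k≠n} 1/(|k|·|n−k|))² converges. -/
open Finset Real

noncomputable def gNN (N m : ℕ) : ℝ :=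
  if m = 0 then 0 else min (((m:ℝ))^2)⁻¹ (2 / ((N:ℝ) * m))

lemma gNN_nonneg (N m : ℕ) : 0 ≤ gNN N m := by
  unfold gNN; split
  · exact le_refl 0
  · exact le_min (by positivity) (by positivity)

lemma sum_gNN_le (N : ℕ) (hN : 1 ≤ N) (u : Finset ℕ) :
    ∑ m ∈ u, gNN N m ≤ (2/(N:ℝ)) * (1 + Real.log N) + 2/(N:ℝ) := by
  set K := max (u.sup id) N with hK
  have hNK : N ≤ K := le_max_right _ _
  have hsub : u ⊆ insert 0 (Finset.Ioc 0 K) := by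
    intro m hm
    rcases Nat.eq_zero_or_pos m with h0 | h0
    · simp [h0]
    · refine Finset.mem_insert_of_mem (Finset.mem_Ioc.2 ⟨h0, ?_⟩)
      exact le_trans (Finset.le_sup (f := id) hm) (le_max_left _ _)
  have h1 : ∑ m ∈ u, gNN N m ≤ ∑ m ∈ insert 0 (Finset.Ioc 0 K), gNN N m :=
    Finset.sum_le_sum_of_subset_of_nonneg hsub (fun m _ _ => gNN_nonneg N m)
  have h2 : ∑ m ∈ insert 0 (Finset.Ioc 0 K), gNN N m = ∑ m ∈ Finset.Ioc 0 K, gNN N m := by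
    rw [Finset.sum_insert (by simp)]
    simp [gNN]
  have h3 : ∑ m ∈ Finset.Ioc 0 K, gNN N m
      = ∑ m ∈ Finset.Ioc 0 N, gNN N m + ∑ m ∈ Finset.Ioc N K, gNN N m :=
    (Finset.sum_Ioc_consecutive _ (Nat.zero_le N) hNK).symm
  -- part 1
  have hNpos : (0:ℝ) < N := by exact_mod_cast hN
  have part1 : ∑ m ∈ Finset.Ioc 0 N, gNN N m ≤ (2/(N:ℝ)) * (1 + Real.log N) := by
    have step : ∑ m ∈ Finset.Ioc 0 N, gNN N m ≤ ∑ m ∈ Finset.Ioc 0 N, (2/(N:ℝ)) * ((m:ℝ))⁻¹ := by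
      refine Finset.sum_le_sum (fun m hm => ?_)
      have hm0 : 0 < m := (Finset.mem_Ioc.1 hm).1
      have hmR : (0:ℝ) < m := by exact_mod_cast hm0
      have : gNN N m ≤ 2 / ((N:ℝ) * m) := by
        unfold gNN
        rw [if_neg hm0.ne']
        exact min_le_right _ _
      calc gNN N m ≤ 2 / ((N:ℝ) * m) := this
        _ = (2/(N:ℝ)) * ((m:ℝ))⁻¹ := by field_simp
    have harm : ∑ m ∈ Finset.Ioc 0 N, ((m:ℝ))⁻¹ ≤ 1 + Real.log N := by
      have hcast : ((harmonic N : ℚ) : ℝ) = ∑ i ∈ Finset.range N, (((i:ℝ)) + 1)⁻¹ := by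
        rw [harmonic]
        push_cast
        rfl
      have hIoc : ∑ m ∈ Finset.Ioc 0 N, ((m:ℝ))⁻¹ = ∑ i ∈ Finset.range N, (((i:ℝ)) + 1)⁻¹ := by
        rw [(Finset.Ico_add_one_add_one_eq_Ioc 0 N).symm, Finset.sum_Ico_eq_sum_range]
        rw [show N+1-(0+1) = N by omega]
        refine Finset.sum_congr rfl (fun i _ => ?_)
        push_cast; ring_nf
      rw [hIoc, ← hcast]
      exact_mod_cast harmonic_le_one_add_log N
    calc ∑ m ∈ Finset.Ioc 0 N, gNN N m ≤ ∑ m ∈ Finset.Ioc 0 N, (2/(N:ℝ)) * ((m:ℝ))⁻¹ := step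
      _ = (2/(N:ℝ)) * ∑ m ∈ Finset.Ioc 0 N, ((m:ℝ))⁻¹ := by rw [Finset.mul_sum]
      _ ≤ (2/(N:ℝ)) * (1 + Real.log N) := by
          refine mul_le_mul_of_nonneg_left harm (by positivity)
  -- part 2
  have part2 : ∑ m ∈ Finset.Ioc N K, gNN N m ≤ 2/(N:ℝ) := by
    have step : ∑ m ∈ Finset.Ioc N K, gNN N m
        ≤ ∑ m ∈ Finset.Ioc N K, (2/((m:ℝ)) - 2/((m:ℝ)+1)) := by
      refine Finset.sum_le_sum (fun m hm => ?_)
      have hm0 : N < m := (Finset.mem_Ioc.1 hm).1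
      have hm1 : 1 ≤ m := le_trans hN hm0.le
      have hmR : (1:ℝ) ≤ m := by exact_mod_cast hm1
      have hmpos : (0:ℝ) < m := lt_of_lt_of_le one_pos hmR
      have h1 : gNN N m ≤ (((m:ℝ))^2)⁻¹ := by
        unfold gNN
        rw [if_neg (by omega)]
        exact min_le_left _ _
      have h2 : (((m:ℝ))^2)⁻¹ ≤ 2/((m:ℝ)) - 2/((m:ℝ)+1) := by
        rw [div_sub_div _ _ (ne_of_gt hmpos) (by positivity),
          inv_eq_one_div, div_le_div_iff₀ (by positivity) (by positivity)]
        nlinarith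
      exact le_trans h1 h2
    have tele : ∑ m ∈ Finset.Ioc N K, (2/((m:ℝ)) - 2/((m:ℝ)+1)) ≤ 2/(N:ℝ) := by
      have heq : ∑ m ∈ Finset.Ioc N K, (2/((m:ℝ)) - 2/((m:ℝ)+1))
          = ∑ i ∈ Finset.range (K - N),
              ((fun j => 2/(((N+1+j:ℕ):ℝ))) i - (fun j => 2/(((N+1+j:ℕ):ℝ))) (i+1)) := by
        rw [(Finset.Ico_add_one_add_one_eq_Ioc N K).symm, Finset.sum_Ico_eq_sum_range]
        rw [show K + 1 - (N + 1) = K - N by omega]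
        refine Finset.sum_congr rfl (fun i _ => ?_)
        have e1 : N + 1 + i + 1 = N + 1 + (i + 1) := by omega
        simp only [e1]
        push_cast
        ring_nf
      rw [heq, Finset.sum_range_sub']
      have hfin : (0:ℝ) ≤ 2/(((N+1+(K-N):ℕ):ℝ)) := by positivity
      have h0 : 2/(((N+1+0:ℕ):ℝ)) ≤ 2/(N:ℝ) := by
        apply div_le_div_of_nonneg_left (by norm_num) hNpos
        push_cast; linarith
      calc 2/(((N+1+0:ℕ):ℝ)) - 2/(((N+1+(K-N):ℕ):ℝ)) ≤ 2/(((N+1+0:ℕ):ℝ)) := by linarith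
        _ ≤ 2/(N:ℝ) := h0
    exact le_trans step tele
  calc ∑ m ∈ u, gNN N m ≤ ∑ m ∈ Finset.Ioc 0 K, gNN N m := by rw [← h2]; exact h1
    _ = _ := h3
    _ ≤ (2/(N:ℝ)) * (1 + Real.log N) + 2/(N:ℝ) := add_le_add part1 part2

lemma sum_gNN_int_le (N : ℕ) (hN : 1 ≤ N) (s : Finset ℤ) :
    ∑ k ∈ s, gNN N k.natAbs ≤ 2 * ((2/(N:ℝ)) * (1 + Real.log N) + 2/(N:ℝ)) := by
  rw [Finset.sum_comp (gNN N) Int.natAbs]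
  have hcard : ∀ m : ℕ, ((s.filter (fun k => k.natAbs = m)).card : ℝ) ≤ 2 := by
    intro m
    have hsub : s.filter (fun k => k.natAbs = m) ⊆ {(m:ℤ), -(m:ℤ)} := by
      intro k hk
      have hk2 := (Finset.mem_filter.1 hk).2
      rcases Int.natAbs_eq k with h | h
      · exact Finset.mem_insert.2 (Or.inl (by rw [h, hk2]))
      · refine Finset.mem_insert.2 (Or.inr (Finset.mem_singleton.2 ?_))
        rw [h, hk2]
    have := Finset.card_le_card hsub
    have h2 : ({(m:ℤ), -(m:ℤ)} : Finset ℤ).card ≤ 2 :=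
      le_trans (Finset.card_insert_le _ _) (by simp)
    exact_mod_cast le_trans this h2
  have step : ∑ m ∈ s.image Int.natAbs, ((s.filter (fun k => k.natAbs = m)).card) • gNN N m
      ≤ ∑ m ∈ s.image Int.natAbs, 2 * gNN N m := by
    refine Finset.sum_le_sum (fun m _ => ?_)
    rw [nsmul_eq_mul]
    exact mul_le_mul_of_nonneg_right (hcard m) (gNN_nonneg N m)
  calc _ ≤ ∑ m ∈ s.image Int.natAbs, 2 * gNN N m := step
    _ = 2 * ∑ m ∈ s.image Int.natAbs, gNN N m := by rw [Finset.mul_sum]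
    _ ≤ 2 * ((2/(N:ℝ)) * (1 + Real.log N) + 2/(N:ℝ)) := by
        exact mul_le_mul_of_nonneg_left (sum_gNN_le N hN _) (by norm_num)

lemma aux_ineq (R a b : ℝ) (hR : 0 < R) (ha : 1 ≤ a) (hab : a ≤ b) (hRb : R ≤ 2*b) :
    (a*b)⁻¹ ≤ min (a^2)⁻¹ (2/(R*a)) := by
  have ha0 : 0 < a := lt_of_lt_of_le one_pos ha
  have hb0 : 0 < b := lt_of_lt_of_le ha0 hab
  refine le_min ?_ ?_
  · apply inv_anti₀ (by positivity)
    nlinarith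
  · rw [inv_eq_one_div, div_le_div_iff₀ (by positivity) (by positivity)]
    nlinarith

lemma key_pointwise (n k : ℤ) :
    (if k ≠ 0 ∧ k ≠ n then (|(k : ℝ)| * |((n - k : ℤ) : ℝ)|)⁻¹ else 0)
      ≤ gNN (max n.natAbs 1) k.natAbs + gNN (max n.natAbs 1) (n-k).natAbs := by
  set N := max n.natAbs 1 with hNdef
  split
  case isFalse => exact add_nonneg (gNN_nonneg _ _) (gNN_nonneg _ _)
  case isTrue h =>
    obtain ⟨hk0, hkn⟩ := h
    set a := |(k : ℝ)| with hadef
    set b := |((n - k : ℤ) : ℝ)| with hbdef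
    have hka : a = (k.natAbs : ℝ) := by
      rw [hadef, Nat.cast_natAbs, Int.cast_abs]
    have hkb : b = ((n-k).natAbs : ℝ) := by
      rw [hbdef, Nat.cast_natAbs, Int.cast_abs]
    have ha1 : 1 ≤ a := by
      rw [hka]; exact_mod_cast Nat.one_le_iff_ne_zero.2 (Int.natAbs_ne_zero.2 hk0)
    have hb1 : 1 ≤ b := by
      rw [hkb]
      exact_mod_cast Nat.one_le_iff_ne_zero.2 (Int.natAbs_ne_zero.2 (sub_ne_zero.2 (Ne.symm hkn)))
    have hR0 : (0:ℝ) < N := by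
      have : 1 ≤ N := le_max_right _ _
      exact_mod_cast lt_of_lt_of_le one_pos this
    have hRab : (N:ℝ) ≤ a + b := by
      have h1 : |(n:ℝ)| ≤ a + b := by
        have : (n:ℝ) = (k:ℝ) + ((n - k : ℤ) : ℝ) := by push_cast; ring
        rw [this]
        exact abs_add_le _ _
      have h2 : ((n.natAbs : ℕ) : ℝ) = |(n:ℝ)| := by rw [Nat.cast_natAbs, Int.cast_abs]
      have h3 : (N:ℝ) = max ((n.natAbs:ℕ):ℝ) 1 := by
        rw [hNdef]; push_cast [Nat.cast_max]; rfl
      rw [h3, h2]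
      exact max_le (le_trans h1 (le_refl _)) (by linarith)
    rcases le_total a b with hab | hab
    · have hRb : (N:ℝ) ≤ 2*b := by linarith
      have := aux_ineq (N:ℝ) a b hR0 ha1 hab hRb
      have hg : min (a^2)⁻¹ (2/((N:ℝ)*a)) = gNN N k.natAbs := by
        unfold gNN
        rw [if_neg (Int.natAbs_ne_zero.2 hk0), hka]
      calc (a*b)⁻¹ ≤ min (a^2)⁻¹ (2/((N:ℝ)*a)) := this
        _ = gNN N k.natAbs := hg
        _ ≤ _ := le_add_of_nonneg_right (gNN_nonneg _ _)
    · have hRb : (N:ℝ) ≤ 2*a := by linarith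
      have := aux_ineq (N:ℝ) b a hR0 hb1 hab hRb
      have hg : min (b^2)⁻¹ (2/((N:ℝ)*b)) = gNN N (n-k).natAbs := by
        unfold gNN
        rw [if_neg (Int.natAbs_ne_zero.2 (sub_ne_zero.2 (Ne.symm hkn))), hkb]
      calc (a*b)⁻¹ = (b*a)⁻¹ := by rw [mul_comm]
        _ ≤ min (b^2)⁻¹ (2/((N:ℝ)*b)) := this
        _ = gNN N (n-k).natAbs := hg
        _ ≤ _ := le_add_of_nonneg_left (gNN_nonneg _ _)

lemma main_finite_bound (n : ℤ) (s : Finset ℤ) :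
    ∑ k ∈ s, (if k ≠ 0 ∧ k ≠ n then (|(k : ℝ)| * |((n - k : ℤ) : ℝ)|)⁻¹ else 0)
      ≤ 96 * (|(n:ℝ)| + 1) ^ (-(3:ℝ)/4) := by
  set N := max n.natAbs 1 with hNdef
  have hN : 1 ≤ N := le_max_right _ _
  have hNpos : (0:ℝ) < N := by exact_mod_cast lt_of_lt_of_le one_pos hN
  have hN1 : (1:ℝ) ≤ N := by exact_mod_cast hN
  have step1 : ∑ k ∈ s, (if k ≠ 0 ∧ k ≠ n then (|(k : ℝ)| * |((n - k : ℤ) : ℝ)|)⁻¹ else 0)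
      ≤ ∑ k ∈ s, (gNN N k.natAbs + gNN N (n-k).natAbs) :=
    Finset.sum_le_sum (fun k _ => key_pointwise n k)
  have step2 : ∑ k ∈ s, (gNN N k.natAbs + gNN N (n-k).natAbs)
      ≤ 4 * ((2/(N:ℝ)) * (1 + Real.log N) + 2/(N:ℝ)) := by
    rw [Finset.sum_add_distrib]
    have hA : ∑ k ∈ s, gNN N k.natAbs ≤ 2 * ((2/(N:ℝ)) * (1 + Real.log N) + 2/(N:ℝ)) :=
      sum_gNN_int_le N hN s
    have hB : ∑ k ∈ s, gNN N (n-k).natAbs ≤ 2 * ((2/(N:ℝ)) * (1 + Real.log N) + 2/(N:ℝ)) := by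
      have himg : ∑ k ∈ s, gNN N (n-k).natAbs
          = ∑ j ∈ s.image (fun k => n - k), gNN N j.natAbs := by
        rw [Finset.sum_image (fun x _ y _ h => by omega)]
      rw [himg]
      exact sum_gNN_int_le N hN _
    linarith
  -- arithmetic
  have hx14 : (1:ℝ) ≤ (N:ℝ) ^ ((1:ℝ)/4) := by
    calc (1:ℝ) = (1:ℝ) ^ ((1:ℝ)/4) := (Real.one_rpow _).symm
      _ ≤ (N:ℝ) ^ ((1:ℝ)/4) := Real.rpow_le_rpow zero_le_one hN1 (by norm_num)
  have hlog : Real.log N ≤ 4 * (N:ℝ) ^ ((1:ℝ)/4) := by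
    have := Real.log_le_rpow_div (le_of_lt hNpos) (by norm_num : (0:ℝ) < 1/4)
    calc Real.log N ≤ (N:ℝ) ^ ((1:ℝ)/4) / (1/4) := this
      _ = 4 * (N:ℝ) ^ ((1:ℝ)/4) := by ring
  have harith : 4 * ((2/(N:ℝ)) * (1 + Real.log N) + 2/(N:ℝ)) ≤ 48 * (N:ℝ) ^ ((1:ℝ)/4) / N := by
    have hnum : 16 + 8 * Real.log N ≤ 48 * (N:ℝ) ^ ((1:ℝ)/4) := by nlinarith
    calc 4 * ((2/(N:ℝ)) * (1 + Real.log N) + 2/(N:ℝ)) = (16 + 8 * Real.log N)/N := by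
          field_simp; ring
      _ ≤ 48 * (N:ℝ) ^ ((1:ℝ)/4) / N := by gcongr
  have hpow : 48 * (N:ℝ) ^ ((1:ℝ)/4) / N = 48 * (N:ℝ) ^ (-(3:ℝ)/4) := by
    rw [show (-(3:ℝ)/4) = 1/4 - 1 by norm_num, Real.rpow_sub hNpos, Real.rpow_one]
    ring
  have habs : |(n:ℝ)| + 1 ≤ 2 * N := by
    have h1 : |(n:ℝ)| = (n.natAbs : ℝ) := by rw [Nat.cast_natAbs, Int.cast_abs]
    have h2 : (n.natAbs : ℝ) ≤ (N:ℝ) := by exact_mod_cast le_max_left n.natAbs 1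
    linarith
  have h2pow : (2:ℝ) ^ ((3:ℝ)/4) ≤ 2 := by
    calc (2:ℝ) ^ ((3:ℝ)/4) ≤ (2:ℝ) ^ (1:ℝ) :=
          Real.rpow_le_rpow_of_exponent_le (by norm_num) (by norm_num)
      _ = 2 := Real.rpow_one 2
  have h34 : (|(n:ℝ)| + 1) ^ ((3:ℝ)/4) ≤ 2 * (N:ℝ) ^ ((3:ℝ)/4) := by
    calc (|(n:ℝ)| + 1) ^ ((3:ℝ)/4) ≤ (2 * (N:ℝ)) ^ ((3:ℝ)/4) :=
          Real.rpow_le_rpow (by positivity) habs (by norm_num)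
      _ = (2:ℝ) ^ ((3:ℝ)/4) * (N:ℝ) ^ ((3:ℝ)/4) := Real.mul_rpow (by norm_num) (le_of_lt hNpos)
      _ ≤ 2 * (N:ℝ) ^ ((3:ℝ)/4) :=
          mul_le_mul_of_nonneg_right h2pow (Real.rpow_nonneg (le_of_lt hNpos) _)
  have hfinal : 48 * (N:ℝ) ^ (-(3:ℝ)/4) ≤ 96 * (|(n:ℝ)| + 1) ^ (-(3:ℝ)/4) := by
    have haN : (0:ℝ) < (N:ℝ) ^ ((3:ℝ)/4) := Real.rpow_pos_of_pos hNpos _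
    have hbn : (0:ℝ) < (|(n:ℝ)| + 1) ^ ((3:ℝ)/4) := Real.rpow_pos_of_pos (by positivity) _
    rw [show (-(3:ℝ)/4) = -((3:ℝ)/4) by norm_num, Real.rpow_neg (le_of_lt hNpos),
      Real.rpow_neg (by positivity : (0:ℝ) ≤ |(n:ℝ)| + 1), ← div_eq_mul_inv, ← div_eq_mul_inv,
      div_le_div_iff₀ haN hbn]
    nlinarith
  calc ∑ k ∈ s, (if k ≠ 0 ∧ k ≠ n then (|(k : ℝ)| * |((n - k : ℤ) : ℝ)|)⁻¹ else 0)
      ≤ ∑ k ∈ s, (gNN N k.natAbs + gNN N (n-k).natAbs) := step1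
    _ ≤ 4 * ((2/(N:ℝ)) * (1 + Real.log N) + 2/(N:ℝ)) := step2
    _ ≤ 48 * (N:ℝ) ^ ((1:ℝ)/4) / N := harith
    _ = 48 * (N:ℝ) ^ (-(3:ℝ)/4) := hpow
    _ ≤ 96 * (|(n:ℝ)| + 1) ^ (-(3:ℝ)/4) := hfinal

lemma summable_majorant :
    Summable (fun n : ℤ => 9216 * (|(n:ℝ)| + 1) ^ (-(3:ℝ)/2)) := by
  apply Summable.mul_left
  have hnat : Summable (fun m : ℕ => ((m:ℝ) + 1) ^ (-(3:ℝ)/2)) := by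
    have h := (Real.summable_nat_rpow.mpr (by norm_num : -(3:ℝ)/2 < -1)).comp_injective
      (add_left_injective 1)
    refine h.congr (fun m => ?_)
    simp only [Function.comp_apply]
    push_cast
    ring_nf
  apply Summable.of_nat_of_neg
  · refine hnat.congr (fun m => ?_)
    simp
  · refine hnat.congr (fun m => ?_)
    simp

theorem double_series_summable :
    Summable (fun n : ℤ =>
      (∑' k : ℤ, if k ≠ 0 ∧ k ≠ n then (|(k : ℝ)| * |((n - k : ℤ) : ℝ)|)⁻¹ else 0) ^ 2) := by
  have hS_nonneg : ∀ n : ℤ,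
      0 ≤ ∑' k : ℤ, if k ≠ 0 ∧ k ≠ n then (|(k : ℝ)| * |((n - k : ℤ) : ℝ)|)⁻¹ else 0 :=
    fun n => tsum_nonneg (fun k => by split <;> positivity)
  have hS_le : ∀ n : ℤ,
      (∑' k : ℤ, if k ≠ 0 ∧ k ≠ n then (|(k : ℝ)| * |((n - k : ℤ) : ℝ)|)⁻¹ else 0)
        ≤ 96 * (|(n:ℝ)| + 1) ^ (-(3:ℝ)/4) :=
    fun n => tsum_le_of_sum_le' (by positivity) (main_finite_bound n)
  refine Summable.of_nonneg_of_le (fun n => sq_nonneg _) (fun n => ?_) summable_majorant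
  have hsq : (∑' k : ℤ, if k ≠ 0 ∧ k ≠ n then (|(k : ℝ)| * |((n - k : ℤ) : ℝ)|)⁻¹ else 0) ^ 2
      ≤ (96 * (|(n:ℝ)| + 1) ^ (-(3:ℝ)/4)) ^ 2 :=
    pow_le_pow_left₀ (hS_nonneg n) (hS_le n) 2
  have hy : (0:ℝ) < |(n:ℝ)| + 1 := by positivity
  have heq : (96 * (|(n:ℝ)| + 1) ^ (-(3:ℝ)/4)) ^ 2 = 9216 * (|(n:ℝ)| + 1) ^ (-(3:ℝ)/2) := by
    rw [mul_pow, sq ((|(n:ℝ)| + 1) ^ (-(3:ℝ)/4)), ← Real.rpow_add hy]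
    norm_num
  rw [heq] at hsq
  exact hsq
end
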